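/- For every α, β ∈ L¹([−1,1]), ∫_{−1}^1∫_{−1}^1 |st + α(s) + β(t)| dt ds ≥ 1, with equality when α = β = 0 (since ∫_{−1}^1∫_{−1}^1 |st| dt ds = 1). Hence min over α, β ∈ L¹([−1,1]) of the L¹ norm of (s,t) ↦ st + α(s) + β(t) over [−1,1]² equals 1. -/

import Mathlib

open MeasureTheory Set

private lemma absInt15 : ∫ t in (-1:ℝ)..1, |t| = 1 := by
  have h1 : ∫ t in (-1:ℝ)..0, |t| = 1/2 := by
    rw [intervalIntegral.integral_congr (g := fun t => -t) (fun t ht => by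
      simp only [uIcc_of_le (by norm_num : (-1:ℝ) ≤ 0), mem_Icc] at ht
      exact abs_of_nonpos ht.2)]
    rw [intervalIntegral.integral_neg, integral_id]; norm_num
  have h2 : ∫ t in (0:ℝ)..1, |t| = 1/2 := by
    rw [intervalIntegral.integral_congr (g := fun t => t) (fun t ht => by
      simp only [uIcc_of_le (by norm_num : (0:ℝ) ≤ 1), mem_Icc] at ht
      exact abs_of_nonneg ht.1)]
    simp [integral_id]
  rw [← intervalIntegral.integral_add_adjacent_intervals (b := (0:ℝ))
      ((continuous_abs).intervalIntegrable _ _) ((continuous_abs).intervalIntegrable _ _), h1, h2]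
  norm_num

private lemma absMulInt15 (s : ℝ) : ∫ t in (-1:ℝ)..1, |s * t| = |s| := by
  simp only [abs_mul]
  rw [intervalIntegral.integral_const_mul, absInt15, mul_one]

private lemma symInt15 (F : ℝ → ℝ) : (∫ t in (-1:ℝ)..1, F (-t)) = ∫ t in (-1:ℝ)..1, F t := by
  rw [intervalIntegral.integral_comp_neg F]; norm_num

private lemma negII15 {F : ℝ → ℝ} (h : IntervalIntegrable F volume (-1) 1) :
    IntervalIntegrable (fun t => F (-t)) volume (-1) 1 := by
  have := (IntervalIntegrable.iff_comp_neg (by simp)).mp h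
  rw [neg_neg] at this
  exact this.symm

private lemma ptwise15 (x a a' b b' : ℝ) :
    4 * |x| ≤ |x + a + b| + |-x + a + b'| + |-x + a' + b| + |x + a' + b'| := by
  have h1 := abs_sub (x+a+b) (-x+a+b')
  have h2 := abs_sub (-x+a'+b) (x+a'+b')
  have h3 := abs_sub (x+a+b - (-x+a+b')) (-x+a'+b - (x+a'+b'))
  have h4 : (x+a+b - (-x+a+b')) - (-x+a'+b - (x+a'+b')) = 4*x := by ring
  have h5 : |(4:ℝ)*x| = 4*|x| := by rw [abs_mul]; norm_num
  rw [h4, h5] at h3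
  linarith

private lemma key15 (α β : ℝ → ℝ) (hαm : StronglyMeasurable α) (hβm : StronglyMeasurable β)
    (hα : IntervalIntegrable α volume (-1) 1) (hβ : IntervalIntegrable β volume (-1) 1) :
    1 ≤ ∫ s in (-1:ℝ)..1, ∫ t in (-1:ℝ)..1, |s * t + α s + β t| := by
  set g : ℝ → ℝ := fun s => ∫ t in (-1:ℝ)..1, |s * t + α s + β t| with hgdef
  have hβn : IntervalIntegrable (fun t => β (-t)) volume (-1) 1 := negII15 hβ
  have hint : ∀ s : ℝ, IntervalIntegrable (fun t => |s * t + α s + β t|) volume (-1) 1 := by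
    intro s
    exact ((((continuous_const.mul continuous_id).add continuous_const).intervalIntegrable
      _ _).add hβ).abs
  have hintn : ∀ s : ℝ, IntervalIntegrable (fun t => |s * (-t) + α s + β (-t)|) volume (-1) 1 := by
    intro s
    exact ((((continuous_const.mul continuous_neg).add continuous_const).intervalIntegrable
      _ _).add hβn).abs
  have hg0 : ∀ s, 0 ≤ g s := fun s =>
    intervalIntegral.integral_nonneg (by norm_num) (fun t _ => abs_nonneg _)
  -- measurability of g
  have hgm : StronglyMeasurable g := by
    have hF : StronglyMeasurable
        (Function.uncurry fun s t : ℝ => |s * t + α s + β t|) :=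
      ((((measurable_fst.mul measurable_snd).add
        (hαm.measurable.comp measurable_fst)).add
        (hβm.measurable.comp measurable_snd)).abs).stronglyMeasurable
    have h2 := hF.integral_prod_right (ν := volume.restrict (Ioc (-1:ℝ) 1))
    have : g = fun s => ∫ t, |s * t + α s + β t| ∂(volume.restrict (Ioc (-1:ℝ) 1)) :=
      funext fun s => intervalIntegral.integral_of_le (by norm_num)
    rw [this]
    exact h2
  -- bound
  set C : ℝ := ∫ t in (-1:ℝ)..1, |β t| with hC
  have hb : ∀ s, g s ≤ |s| + 2 * |α s| + C := by
    intro s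
    have hrhs : IntervalIntegrable (fun t => |s * t| + |α s| + |β t|) volume (-1) 1 :=
      (((continuous_const.mul continuous_id).abs.add continuous_const).intervalIntegrable
        _ _).add hβ.abs
    have hmono : g s ≤ ∫ t in (-1:ℝ)..1, (|s * t| + |α s| + |β t|) := by
      refine intervalIntegral.integral_mono_on (by norm_num) (hint s) hrhs (fun t _ => ?_)
      calc |s * t + α s + β t| ≤ |s * t + α s| + |β t| := abs_add_le _ _
        _ ≤ |s * t| + |α s| + |β t| := by linarith [abs_add_le (s*t) (α s)]
    have hii1 : IntervalIntegrable (fun t : ℝ => |s * t| + |α s|) volume (-1) 1 :=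
      Continuous.intervalIntegrable (by continuity) _ _
    have hii2 : IntervalIntegrable (fun t : ℝ => |s * t|) volume (-1) 1 :=
      Continuous.intervalIntegrable (by continuity) _ _
    have hsplit : (∫ t in (-1:ℝ)..1, (|s * t| + |α s| + |β t|)) = |s| + 2 * |α s| + C := by
      rw [intervalIntegral.integral_add hii1 hβ.abs,
        intervalIntegral.integral_add hii2 intervalIntegrable_const,
        absMulInt15, intervalIntegral.integral_const, smul_eq_mul]
      ring
    linarith [hmono, le_of_eq hsplit]
  have hgi : IntervalIntegrable g volume (-1) 1 := by
    rw [intervalIntegrable_iff]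
    have hbd : IntegrableOn (fun s => |s| + 2 * |α s| + C) (Set.uIoc (-1:ℝ) 1) volume := by
      rw [← intervalIntegrable_iff]
      exact ((continuous_abs.intervalIntegrable _ _).add (hα.abs.const_mul 2)).add
        intervalIntegrable_const
    refine Integrable.mono' hbd hgm.aestronglyMeasurable ?_
    filter_upwards with s
    rw [Real.norm_eq_abs, abs_of_nonneg (hg0 s)]
    exact hb s
  have hgni : IntervalIntegrable (fun s => g (-s)) volume (-1) 1 := negII15 hgi
  -- key pointwise-in-s inequality
  have hkey : ∀ s : ℝ, 2 * |s| ≤ g s + g (-s) := by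
    intro s
    have e1 : (∫ t in (-1:ℝ)..1, |s * (-t) + α s + β (-t)|) = g s :=
      symInt15 (fun t => |s * t + α s + β t|)
    have e2 : (∫ t in (-1:ℝ)..1, |(-s) * (-t) + α (-s) + β (-t)|) = g (-s) :=
      symInt15 (fun t => |(-s) * t + α (-s) + β t|)
    have h4 : (∫ t in (-1:ℝ)..1,
        (|s * t + α s + β t| + |s * (-t) + α s + β (-t)| + |(-s) * t + α (-s) + β t|
          + |(-s) * (-t) + α (-s) + β (-t)|)) = 2 * g s + 2 * g (-s) := by
      rw [intervalIntegral.integral_add (((hint s).add (hintn s)).add (hint (-s))) (hintn (-s)),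
        intervalIntegral.integral_add ((hint s).add (hintn s)) (hint (-s)),
        intervalIntegral.integral_add (hint s) (hintn s), e1, e2]
      ring
    have h5 : (∫ t in (-1:ℝ)..1, 4 * |s * t|) ≤ ∫ t in (-1:ℝ)..1,
        (|s * t + α s + β t| + |s * (-t) + α s + β (-t)| + |(-s) * t + α (-s) + β t|
          + |(-s) * (-t) + α (-s) + β (-t)|) := by
      refine intervalIntegral.integral_mono_on (by norm_num)
        ((continuous_const.mul ((continuous_const.mul continuous_id).abs)).intervalIntegrable _ _)
        ((((hint s).add (hintn s)).add (hint (-s))).add (hintn (-s))) (fun t _ => ?_)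
      have h := ptwise15 (s * t) (α s) (α (-s)) (β t) (β (-t))
      rw [mul_neg, neg_mul, neg_mul_neg] at *
      linarith
    have h6 : (∫ t in (-1:ℝ)..1, 4 * |s * t|) = 4 * |s| := by
      rw [intervalIntegral.integral_const_mul, absMulInt15]
    rw [h4, h6] at h5
    linarith
  have houter : (∫ s in (-1:ℝ)..1, 2 * |s|) ≤ ∫ s in (-1:ℝ)..1, (g s + g (-s)) :=
    intervalIntegral.integral_mono_on (by norm_num)
      ((continuous_const.mul continuous_abs).intervalIntegrable _ _)
      (hgi.add hgni) (fun s _ => hkey s)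
  have h7 : (∫ s in (-1:ℝ)..1, 2 * |s|) = 2 := by
    rw [intervalIntegral.integral_const_mul, absInt15]; norm_num
  have h8 : (∫ s in (-1:ℝ)..1, (g s + g (-s))) = 2 * ∫ s in (-1:ℝ)..1, g s := by
    rw [intervalIntegral.integral_add hgi hgni, symInt15 g]; ring
  rw [h7, h8] at houter
  linarith

/-- L¹ minimization: the L¹ norm of st + α(s) + β(t) on [-1,1]² is at least 1,
with equality at α = β = 0. -/
theorem stmt_15 (α β : ℝ → ℝ)
    (hα : Integrable α (volume.restrict (Icc (-1 : ℝ) 1)))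
    (hβ : Integrable β (volume.restrict (Icc (-1 : ℝ) 1))) :
    (∫ s in (-1 : ℝ)..1, ∫ t in (-1 : ℝ)..1, |s * t + α s + β t|) ≥ 1
    ∧ (∫ s in (-1 : ℝ)..1, ∫ t in (-1 : ℝ)..1, |s * t|) = 1 := by
  constructor
  · -- replace α, β by strongly measurable representatives
    set α' := hα.1.mk α with hα'def
    set β' := hβ.1.mk β with hβ'def
    have hmono : (volume.restrict (Ioc (-1:ℝ) 1)) ≤ volume.restrict (Icc (-1:ℝ) 1) :=
      Measure.restrict_mono Ioc_subset_Icc_self le_rfl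
    have hαae : α =ᵐ[volume.restrict (Ioc (-1:ℝ) 1)] α' :=
      (hα.1.ae_eq_mk).filter_mono (ae_mono hmono)
    have hβae : β =ᵐ[volume.restrict (Ioc (-1:ℝ) 1)] β' :=
      (hβ.1.ae_eq_mk).filter_mono (ae_mono hmono)
    have hαI : IntervalIntegrable α' volume (-1) 1 := by
      rw [intervalIntegrable_iff, uIoc_of_le (by norm_num : (-1:ℝ) ≤ 1)]
      exact (hα.mono_measure hmono).congr hαae
    have hβI : IntervalIntegrable β' volume (-1) 1 := by
      rw [intervalIntegrable_iff, uIoc_of_le (by norm_num : (-1:ℝ) ≤ 1)]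
      exact (hβ.mono_measure hmono).congr hβae
    have hinner : ∀ s : ℝ, (∫ t in (-1:ℝ)..1, |s * t + α s + β t|)
        = ∫ t in (-1:ℝ)..1, |s * t + α s + β' t| := by
      intro s
      rw [intervalIntegral.integral_of_le (by norm_num : (-1:ℝ) ≤ 1),
        intervalIntegral.integral_of_le (by norm_num : (-1:ℝ) ≤ 1)]
      exact integral_congr_ae (hβae.mono fun t ht => by dsimp; rw [ht])
    have houter : (∫ s in (-1:ℝ)..1, ∫ t in (-1:ℝ)..1, |s * t + α s + β' t|)
        = ∫ s in (-1:ℝ)..1, ∫ t in (-1:ℝ)..1, |s * t + α' s + β' t| := by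
      rw [intervalIntegral.integral_of_le (by norm_num : (-1:ℝ) ≤ 1),
        intervalIntegral.integral_of_le (by norm_num : (-1:ℝ) ≤ 1)]
      refine integral_congr_ae (hαae.mono fun s hs => ?_)
      dsimp
      rw [hs]
    calc (1:ℝ) ≤ ∫ s in (-1:ℝ)..1, ∫ t in (-1:ℝ)..1, |s * t + α' s + β' t| :=
          key15 α' β' (hα.1.stronglyMeasurable_mk) (hβ.1.stronglyMeasurable_mk) hαI hβI
      _ = ∫ s in (-1:ℝ)..1, ∫ t in (-1:ℝ)..1, |s * t + α s + β t| := by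
          rw [← houter]
          exact (intervalIntegral.integral_congr (fun s _ => (hinner s))).symm
  · simp only [absMulInt15]
    exact absInt15
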